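/- Let q be a prime power, n ≥ 2, and let W = {ω_0, …, ω_{n-1}} be a basis of F_{q^n} over F_q. The map ψ_W from PG(n-1,q) to μ_{(q^n-1)/(q-1)} defined by ψ_W(x_0 : … : x_{n-1}) = (∑_j x_j ω_j)^{q-1} is well-defined (independent of the choice of representative) and bijective. -/

import Mathlib

open Polynomial in
/-- In a finite-field extension, any element fixed by `x ↦ x ^ (card K)` lies in the image
of the base field. -/
lemma aux_fixed {K L : Type*} [Field K] [Fintype K] [Field L] [Fintype L] [Algebra K L]
    {z : L} (hz : z ^ Fintype.card K = z) : ∃ c : K, algebraMap K L c = z := by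
  classical
  set q := Fintype.card K with hq
  have hq1 : 1 < q := Fintype.one_lt_card
  have hP : (X ^ q - X : L[X]) ≠ 0 := FiniteField.X_pow_card_sub_X_ne_zero L hq1
  set S : Finset L := (X ^ q - X : L[X]).roots.toFinset with hS
  have himg : (Finset.univ.image (algebraMap K L)) ⊆ S := by
    intro x hx
    obtain ⟨c, -, rfl⟩ := Finset.mem_image.mp hx
    simp only [hS, Multiset.mem_toFinset, mem_roots hP, IsRoot.def, eval_sub, eval_pow, eval_X]
    rw [← map_pow, FiniteField.pow_card, sub_self]
  have hScard : S.card ≤ q := by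
    calc S.card ≤ Multiset.card (X ^ q - X : L[X]).roots := Multiset.toFinset_card_le _
    _ ≤ (X ^ q - X : L[X]).natDegree := (X ^ q - X : L[X]).card_roots'
    _ = q := FiniteField.X_pow_card_sub_X_natDegree_eq L hq1
  have hcardimg : (Finset.univ.image (algebraMap K L)).card = q := by
    rw [Finset.card_image_of_injective _ (algebraMap K L).injective, Finset.card_univ]
  have heq : (Finset.univ.image (algebraMap K L)) = S :=
    Finset.eq_of_subset_of_card_le himg (by omega)
  have hzS : z ∈ S := by
    simp only [hS, Multiset.mem_toFinset, mem_roots hP, IsRoot.def, eval_sub, eval_pow, eval_X]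
    rw [hz, sub_self]
  rw [← heq] at hzS
  obtain ⟨c, -, hc⟩ := Finset.mem_image.mp hzS
  exact ⟨c, hc⟩

theorem stmt2 (K L : Type*) [Field K] [Fintype K] [Field L] [Fintype L] [Algebra K L]
    (n : ℕ) (hn : 2 ≤ n) (hd : Module.finrank K L = n)
    (ω : Fin n → L) (hω : ∃ b : Module.Basis (Fin n) K L, ∀ i, b i = ω i) :
    ∃ ψ : Projectivization K (Fin n → K) → L,
      (∀ (v : Fin n → K) (hv : v ≠ 0),
        ψ (Projectivization.mk K v hv) = (∑ j, v j • ω j) ^ (Fintype.card K - 1)) ∧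
      Function.Injective ψ ∧
      Set.range ψ =
        {x : L | x ≠ 0 ∧ x ^ ((Fintype.card K ^ n - 1) / (Fintype.card K - 1)) = 1} := by
  classical
  obtain ⟨b, hb⟩ := hω
  set q := Fintype.card K with hq
  have hq1 : 1 < q := Fintype.one_lt_card
  have hcardL : Fintype.card L = q ^ n := by
    rw [Module.card_fintype b, Fintype.card_fin]
  -- the sum is `b.equivFun.symm v`
  have hsum : ∀ v : Fin n → K, (∑ j, v j • ω j) = b.equivFun.symm v := by
    intro v
    rw [b.equivFun_symm_apply]
    exact Finset.sum_congr rfl fun j _ => by rw [hb]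
  have hsum_ne : ∀ (v : Fin n → K), v ≠ 0 → (∑ j, v j • ω j) ≠ 0 := by
    intro v hv h
    apply hv
    have := b.equivFun.symm.injective (a₁ := v) (a₂ := 0) (by rw [← hsum v, h, map_zero])
    exact this
  -- divisibility
  have hdvd : (q - 1) ∣ (q ^ n - 1) := by
    simpa using Nat.sub_dvd_pow_sub_pow q 1 n
  set m := (q ^ n - 1) / (q - 1) with hm
  have hmul : (q - 1) * m = q ^ n - 1 := Nat.mul_div_cancel' hdvd
  have hmpos : 0 < m := by
    apply Nat.div_pos _ (by omega)
    have : q ≤ q ^ n := Nat.le_self_pow (by omega) q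
    omega
  -- the lifted map
  refine ⟨Projectivization.lift (fun v => (∑ j, v.1 j • ω j) ^ (q - 1)) ?_, ?_, ?_, ?_⟩
  · rintro ⟨a, ha⟩ ⟨c, hc⟩ t (rfl : _ = t • c)
    have ht : t ≠ 0 := by
      rintro rfl; exact ha (zero_smul _ _)
    simp only
    have : (∑ j, (t • c) j • ω j) = algebraMap K L t * ∑ j, c j • ω j := by
      rw [Finset.mul_sum]
      refine Finset.sum_congr rfl fun j _ => ?_
      rw [Pi.smul_apply, smul_eq_mul, ← smul_smul, Algebra.smul_def]
    rw [this, mul_pow, ← map_pow, FiniteField.pow_card_sub_one_eq_one t ht, map_one, one_mul]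
  · intro v hv
    rfl
  · -- injectivity
    intro x y
    induction x using Projectivization.ind with
    | h v hv =>
    induction y using Projectivization.ind with
    | h w hw =>
    intro hxy
    simp only [Projectivization.lift_mk] at hxy
    set s := ∑ j, v j • ω j with hs
    set t := ∑ j, w j • ω j with hts
    have hs0 : s ≠ 0 := hsum_ne v hv
    have ht0 : t ≠ 0 := hsum_ne w hw
    have hz : (s / t) ^ q = s / t := by
      have h1 : (s / t) ^ (q - 1) = 1 := by
        rw [div_pow, hxy, div_self (pow_ne_zero _ ht0)]
      calc (s / t) ^ q = (s / t) ^ (q - 1) * (s / t) := by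
            rw [← pow_succ]; congr 1; omega
      _ = s / t := by rw [h1, one_mul]
    obtain ⟨c, hc⟩ := aux_fixed hz
    have hc0 : c ≠ 0 := by
      rintro rfl
      rw [map_zero] at hc
      exact hs0 (by rw [eq_comm, div_eq_zero_iff] at hc; exact hc.resolve_right ht0)
    rw [Projectivization.mk_eq_mk_iff' K v w hv hw]
    refine ⟨c, ?_⟩
    -- c • w = v since their images under the injective map coincide
    have himg : (∑ j, (c • w) j • ω j) = ∑ j, v j • ω j := by
      have : (∑ j, (c • w) j • ω j) = algebraMap K L c * t := by
        rw [hts, Finset.mul_sum]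
        refine Finset.sum_congr rfl fun j _ => ?_
        rw [Pi.smul_apply, smul_eq_mul, ← smul_smul, Algebra.smul_def]
      rw [this, hc, div_mul_cancel₀ _ ht0, hs]
    have := b.equivFun.symm.injective (a₁ := c • w) (a₂ := v)
      (by rw [← hsum, ← hsum, himg])
    exact this
  · -- range
    ext x
    simp only [Set.mem_range, Set.mem_setOf_eq]
    constructor
    · rintro ⟨p, rfl⟩
      induction p using Projectivization.ind with
      | h v hv =>
      simp only [Projectivization.lift_mk]
      have hs0 : (∑ j, v j • ω j) ≠ 0 := hsum_ne v hv
      refine ⟨pow_ne_zero _ hs0, ?_⟩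
      rw [← pow_mul, hmul, ← hcardL]
      exact FiniteField.pow_card_sub_one_eq_one _ hs0
    · rintro ⟨hx0, hxm⟩
      -- use a cyclic generator of Lˣ
      obtain ⟨g, hg⟩ := IsCyclic.exists_generator (α := Lˣ)
      set u : Lˣ := Units.mk0 x hx0 with hu
      obtain ⟨k, hk⟩ := mem_powers_iff_mem_zpowers.mpr (hg u)
      have hk' : g ^ k = u := hk
      have hordg : orderOf g = q ^ n - 1 := by
        rw [orderOf_eq_card_of_forall_mem_zpowers hg, Nat.card_eq_fintype_card,
          Fintype.card_units, hcardL]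
      have hukm : g ^ (k * m) = 1 := by
        rw [pow_mul, hk']
        ext
        push_cast
        simpa [hu] using hxm
      have hdvd2 : (q - 1) * m ∣ k * m := by
        rw [hmul, ← hordg]
        exact orderOf_dvd_of_pow_eq_one hukm
      have hdvd3 : (q - 1) ∣ k := (Nat.mul_dvd_mul_iff_right hmpos).mp hdvd2
      obtain ⟨j, rfl⟩ := hdvd3
      -- so x = ((g^j : L))^(q-1)
      set w : L := ((g ^ j : Lˣ) : L) with hw
      have hw0 : w ≠ 0 := Units.ne_zero _
      have hxw : x = w ^ (q - 1) := by
        have : ((g ^ ((q - 1) * j) : Lˣ) : L) = x := by rw [hk']; rfl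
        rw [← this, hw, mul_comm, pow_mul]
        push_cast
        ring
      set v : Fin n → K := b.equivFun w with hv
      have hv0 : v ≠ 0 := by
        intro h
        apply hw0
        have : b.equivFun.symm v = w := b.equivFun.symm_apply_apply w
        rw [← this, h, map_zero]
      refine ⟨Projectivization.mk K v hv0, ?_⟩
      simp only [Projectivization.lift_mk]
      rw [hsum, hv, b.equivFun.symm_apply_apply, ← hxw]
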